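/- Let (G, 𝒫, 𝒯) be an instance of Partitioned Vertex Cover and let H be the Popular Matching instance constructed from it. If M is a popular matching in H and U := {i ∈ V(G) : {a_i, b_i} ∈ M}, then for every triple T ∈ 𝒯 it holds that |U ∩ T| = 2. -/

import Mathlib

open SimpleGraph

universe u

/-- A matching: a set of edges of `G` that are pairwise vertex-disjoint. -/
def IsMatching {W : Type u} (G : SimpleGraph W) (M : Set (Sym2 W)) : Prop :=
  M ⊆ G.edgeSet ∧ ∀ e ∈ M, ∀ e' ∈ M, e ≠ e' → ∀ v : W, v ∈ e → v ∉ e'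

/-- `v` is matched by `M`. -/
def Matched {W : Type u} (M : Set (Sym2 W)) (v : W) : Prop := ∃ w : W, s(v, w) ∈ M

open scoped Classical in
/-- `rank G pref M v = pref v (M(v))`, with the convention `|N(v)|+1` if `v` is unmatched. -/
noncomputable def rank {W : Type u} (G : SimpleGraph W) (pref : W → W → ℕ)
    (M : Set (Sym2 W)) (v : W) : ℕ :=
  if h : ∃ w : W, s(v, w) ∈ M then pref v h.choose else (G.neighborSet v).ncard + 1

/-- The number of vertices preferring `M` over `M'`. -/
noncomputable def vote {W : Type u} (G : SimpleGraph W) (pref : W → W → ℕ)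
    (M M' : Set (Sym2 W)) : ℕ :=
  {v : W | rank G pref M v < rank G pref M' v}.ncard

/-- A popular matching: no other matching is more popular. -/
def IsPopular {W : Type u} (G : SimpleGraph W) (pref : W → W → ℕ) (M : Set (Sym2 W)) : Prop :=
  IsMatching G M ∧
    ∀ M' : Set (Sym2 W), IsMatching G M' → vote G pref M' M ≤ vote G pref M M'

/-- Each vertex has a strict preference list: `pref v` is a bijection from the
neighborhood of `v` onto `{1, …, |N(v)|}`. -/
def HasPref {W : Type u} (G : SimpleGraph W) (pref : W → W → ℕ) : Prop :=
  ∀ v : W, Set.BijOn (pref v) (G.neighborSet v) (Set.Icc 1 (G.neighborSet v).ncard)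

/-- The edge `e ∉ M` is labeled `+2` by `label_M` (given rank function `rk`):
both endpoints prefer each other over their status in `M`. -/
def EdgePlus {W : Type u} (pref : W → W → ℕ) (rk : W → ℕ) (e : Sym2 W) : Prop :=
  ∃ x y : W, e = s(x, y) ∧ pref x y < rk x ∧ pref y x < rk y

/-- The edge `e ∉ M` is labeled `-2` by `label_M` (given rank function `rk`):
both endpoints prefer their status in `M` over each other. -/
def EdgeMinus {W : Type u} (pref : W → W → ℕ) (rk : W → ℕ) (e : Sym2 W) : Prop :=
  ∃ x y : W, e = s(x, y) ∧ rk x < pref x y ∧ rk y < pref y x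

/-- The graph `G_M`: the spanning subgraph of `G` consisting of the edges of `M`
together with the edges not labeled `-2`. -/
def GMgraph {W : Type u} (G : SimpleGraph W) (pref : W → W → ℕ) (M : Set (Sym2 W)) :
    SimpleGraph W where
  Adj x y := G.Adj x y ∧ (s(x, y) ∈ M ∨ ¬ EdgeMinus pref (rank G pref M) s(x, y))
  symm := by
    constructor
    intro x y h
    refine ⟨h.1.symm, ?_⟩
    rw [Sym2.eq_swap]
    exact h.2
  loopless := by
    constructor
    intro x h
    exact G.irrefl h.1

/-- Consecutive edges alternate between `M` and non-`M`. -/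
def altRel {W : Type u} (M : Set (Sym2 W)) (e e' : Sym2 W) : Prop := e ∈ M ↔ e' ∉ M

/-- An alternating path (with respect to `M`) in a graph `G'`. -/
def IsAltPath {W : Type u} (M : Set (Sym2 W)) {G' : SimpleGraph W} {x y : W}
    (p : G'.Walk x y) : Prop :=
  p.IsPath ∧ List.Chain' (altRel M) p.edges ∧
    (∀ e, p.edges.head? = some e → e ∉ M → ¬ Matched M x) ∧
    (∀ e, p.edges.getLast? = some e → e ∉ M → ¬ Matched M y)

/-- An alternating cycle (with respect to `M`) in a graph `G'`:
the edges alternate cyclically between `M` and non-`M`. -/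
def IsAltCycle {W : Type u} (M : Set (Sym2 W)) {G' : SimpleGraph W} {x : W}
    (p : G'.Walk x x) : Prop :=
  p.IsCycle ∧ List.Chain' (altRel M) (p.edges ++ p.edges.take 1)

/-- `l` contains at least one edge labeled `+2`. -/
def OnePlusEdge {W : Type u} (pref : W → W → ℕ) (rk : W → ℕ) (l : List (Sym2 W)) : Prop :=
  ∃ e ∈ l, EdgePlus pref rk e

/-- `l` contains at least two edges labeled `+2`. -/
def TwoPlusEdges {W : Type u} (pref : W → W → ℕ) (rk : W → ℕ) (l : List (Sym2 W)) : Prop :=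
  ∃ e ∈ l, ∃ e' ∈ l, e ≠ e' ∧ EdgePlus pref rk e ∧ EdgePlus pref rk e'

/-- A vertex cover. -/
def IsVC {V : Type u} (G : SimpleGraph V) (U : Set V) : Prop :=
  ∀ ⦃x y : V⦄, G.Adj x y → x ∈ U ∨ y ∈ U
/-- An instance of Partitioned Vertex Cover: `G` is a finite simple graph, `P` is a
collection of pairwise disjoint edges of `G`, `T` is a collection of pairwise disjoint
3-element vertex sets each inducing a triangle in `G`, and every vertex of `G` lies in
exactly one member of `P ∪ T`. -/
def IsPVC {V : Type u} (G : SimpleGraph V) (P : Set (Sym2 V)) (T : Set (Finset V)) : Prop :=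
  Finite V ∧
  P ⊆ G.edgeSet ∧
  (∀ e ∈ P, ∀ e' ∈ P, e ≠ e' → ∀ v : V, v ∈ e → v ∉ e') ∧
  (∀ t ∈ T, t.card = 3) ∧
  (∀ t ∈ T, ∀ x ∈ t, ∀ y ∈ t, x ≠ y → G.Adj x y) ∧
  (∀ t ∈ T, ∀ t' ∈ T, t ≠ t' → ∀ v : V, v ∈ t → v ∉ t') ∧
  (∀ v : V, (∃ e ∈ P, v ∈ e) ∨ (∃ t ∈ T, v ∈ t)) ∧
  (∀ v : V, ¬ ((∃ e ∈ P, v ∈ e) ∧ (∃ t ∈ T, v ∈ t)))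

/-- A solution of a Partitioned Vertex Cover instance: a vertex cover `U` with
`|U ∩ P| = 1` for every pair `P` and `|U ∩ T| = 2` for every triple `T`. -/
def IsPVCSolution {V : Type u} (G : SimpleGraph V) (P : Set (Sym2 V)) (T : Set (Finset V))
    (U : Set V) : Prop :=
  IsVC G U ∧
  (∀ e ∈ P, {x : V | x ∈ e ∧ x ∈ U}.ncard = 1) ∧
  (∀ t ∈ T, {x : V | x ∈ t ∧ x ∈ U}.ncard = 2)

/-- The vertices of the graph `H` built from a Partitioned Vertex Cover instance:
`a i`, `b i`, `c i`, `d i` for a vertex `i` of `G`; `u i j` is the vertex `u^e_i` for the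
edge `e = {i,j}` of `G`; `f i j` is the vertex `f_{ij}` for the pair `{i,j} ∈ P`. -/
inductive Gad (V : Type u) : Type u where
  | a : V → Gad V
  | b : V → Gad V
  | c : V → Gad V
  | d : V → Gad V
  | u : V → V → Gad V
  | f : V → V → Gad V
deriving DecidableEq

/-- Which formal gadget vertices are really vertices of `H`. -/
def Gad.valid {V : Type u} (G : SimpleGraph V) (P : Set (Sym2 V)) : Gad V → Prop
  | .u i j => G.Adj i j
  | .f i j => s(i, j) ∈ P
  | _ => True

/-- The edges of `H`, up to symmetry. -/
inductive HBase {V : Type u} (G : SimpleGraph V) (P : Set (Sym2 V)) (T : Set (Finset V)) :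
    Gad V → Gad V → Prop where
  | da (i : V) : HBase G P T (.d i) (.a i)
  | ab (i : V) : HBase G P T (.a i) (.b i)
  | ac (i : V) : HBase G P T (.a i) (.c i)
  | bc (i : V) : HBase G P T (.b i) (.c i)
  | uu {i j : V} (h : G.Adj i j) : HBase G P T (.u i j) (.u j i)
  | bu {i j : V} (h : G.Adj i j) : HBase G P T (.b i) (.u i j)
  | df {i j : V} (h : s(i, j) ∈ P) : HBase G P T (.d i) (.f i j)
  | fc {i j : V} (h : s(i, j) ∈ P) : HBase G P T (.f i j) (.c j)
  | cd {i j : V} (h : s(i, j) ∈ P) : HBase G P T (.c i) (.d j)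
  | dd {i j : V} {t : Finset V} (ht : t ∈ T) (hi : i ∈ t) (hj : j ∈ t) (hne : i ≠ j) :
      HBase G P T (.d i) (.d j)
  | cc {i j : V} {t : Finset V} (ht : t ∈ T) (hi : i ∈ t) (hj : j ∈ t) (hne : i ≠ j) :
      HBase G P T (.c i) (.c j)

/-- The graph `H` of the Popular Matching instance built from `(G, P, T)`. -/
def Hgraph {V : Type u} (G : SimpleGraph V) (P : Set (Sym2 V)) (T : Set (Finset V)) :
    SimpleGraph {g : Gad V // Gad.valid G P g} where
  Adj x y := x ≠ y ∧ (HBase G P T x.1 y.1 ∨ HBase G P T y.1 x.1)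
  symm := by
    constructor
    intro _ _ h
    exact ⟨h.1.symm, h.2.symm⟩
  loopless := by
    constructor
    intro _ h
    exact h.1 rfl

/-- The Popular Matching instance (graph together with preference lists) constructed
from a Partitioned Vertex Cover instance `(G, P, T)`.  The field `pref` gives the
preference lists; all its values on the neighborhoods in `H` are pinned down, except
the ranks that `b i` assigns to the vertices `u^e_i`, which form an arbitrary fixed
bijection onto `{2, …, deg_G(i) + 1}`. -/
structure Reduction (V : Type u) [LinearOrder V] : Type u where
  G : SimpleGraph V
  P : Set (Sym2 V)
  T : Set (Finset V)
  ispvc : IsPVC G P T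
  pref : Gad V → Gad V → ℕ
  pref_ab : ∀ i : V, pref (.a i) (.b i) = 1
  pref_ac : ∀ i : V, pref (.a i) (.c i) = 2
  pref_ad : ∀ i : V, pref (.a i) (.d i) = 3
  pref_ba : ∀ i : V, pref (.b i) (.a i) = 1
  pref_bu : ∀ i : V, Set.BijOn (pref (.b i)) {g : Gad V | ∃ j : V, G.Adj i j ∧ g = .u i j}
      (Set.Icc 2 ((G.neighborSet i).ncard + 1))
  pref_bc : ∀ i : V, pref (.b i) (.c i) = (G.neighborSet i).ncard + 2
  pref_ca : ∀ i : V, pref (.c i) (.a i) = 1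
  pref_cb : ∀ i : V, pref (.c i) (.b i) = 2
  pref_da : ∀ i : V, pref (.d i) (.a i) = 1
  pref_uu : ∀ i j : V, G.Adj i j → pref (.u i j) (.u j i) = 1
  pref_ub : ∀ i j : V, G.Adj i j → pref (.u i j) (.b i) = 2
  pref_cf : ∀ i j : V, s(i, j) ∈ P → pref (.c i) (.f j i) = 3
  pref_cd : ∀ i j : V, s(i, j) ∈ P → pref (.c i) (.d j) = 4
  pref_dc : ∀ i j : V, s(i, j) ∈ P → pref (.d i) (.c j) = 2
  pref_df : ∀ i j : V, s(i, j) ∈ P → pref (.d i) (.f i j) = 3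
  pref_fd : ∀ i j : V, s(i, j) ∈ P → pref (.f i j) (.d i) = 1
  pref_fc : ∀ i j : V, s(i, j) ∈ P → pref (.f i j) (.c j) = 2
  pref_tri : ∀ t ∈ T, ∀ i j k : V, t = {i, j, k} → i < j → j < k →
    pref (.c i) (.c k) = 3 ∧ pref (.c i) (.c j) = 4 ∧
    pref (.c j) (.c i) = 3 ∧ pref (.c j) (.c k) = 4 ∧
    pref (.c k) (.c j) = 3 ∧ pref (.c k) (.c i) = 4 ∧
    pref (.d i) (.d j) = 2 ∧ pref (.d i) (.d k) = 3 ∧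
    pref (.d j) (.d k) = 2 ∧ pref (.d j) (.d i) = 3 ∧
    pref (.d k) (.d i) = 2 ∧ pref (.d k) (.d j) = 3

namespace Reduction

variable {V : Type u} [LinearOrder V] (R : Reduction V)

/-- The vertex set of `H`. -/
abbrev HV : Type u := {g : Gad V // Gad.valid R.G R.P g}

/-- The graph `H`. -/
def H : SimpleGraph R.HV := Hgraph R.G R.P R.T

/-- The preference lists of `H`, as a function on its vertices. -/
def prefH : R.HV → R.HV → ℕ := fun x y => R.pref x.1 y.1

/-- The vertex `a_i` of `H`. -/
def va (i : V) : R.HV := ⟨.a i, trivial⟩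
/-- The vertex `b_i` of `H`. -/
def vb (i : V) : R.HV := ⟨.b i, trivial⟩
/-- The vertex `c_i` of `H`. -/
def vc (i : V) : R.HV := ⟨.c i, trivial⟩
/-- The vertex `d_i` of `H`. -/
def vd (i : V) : R.HV := ⟨.d i, trivial⟩
/-- The vertex `u^e_i` of `H`, for an edge `e = {i,j}` of `G`. -/
def vu (i j : V) (h : R.G.Adj i j) : R.HV := ⟨.u i j, h⟩
/-- The vertex `f_{ij}` of `H`, for a pair `{i,j} ∈ P`. -/
def vf (i j : V) (h : s(i, j) ∈ R.P) : R.HV := ⟨.f i j, h⟩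

/-- The matching `M*` in `H` constructed from a solution `U`. -/
def Mstar (U : Set V) : Set (Sym2 R.HV) :=
  {e : Sym2 R.HV |
    (∃ (i j : V) (h : R.G.Adj i j), e = s(R.vu i j h, R.vu j i h.symm)) ∨
    (∃ (x y : V) (h : s(x, y) ∈ R.P) (h' : s(y, x) ∈ R.P), x ∉ U ∧ y ∈ U ∧
      (e = s(R.va x, R.vd x) ∨ e = s(R.vb x, R.vc x) ∨ e = s(R.va y, R.vb y) ∨
       e = s(R.vf x y h, R.vc y) ∨ e = s(R.vf y x h', R.vd y))) ∨
    (∃ t ∈ R.T, ∃ x y z : V, t = {x, y, z} ∧ x ∉ U ∧ y ∈ U ∧ z ∈ U ∧ y ≠ z ∧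
      R.pref (.d x) (.d y) < R.pref (.d x) (.d z) ∧
      (e = s(R.va x, R.vd x) ∨ e = s(R.vb x, R.vc x) ∨ e = s(R.va y, R.vb y) ∨
       e = s(R.va z, R.vb z) ∨ e = s(R.vc y, R.vc z) ∨ e = s(R.vd y, R.vd z)))}

end Reduction

/-- The vertex set of the Pair Selector gadget associated with a pair `{i,j}`. -/
def pairGadget {V : Type u} (i j : V) : Set (Gad V) :=
  {g : Gad V | ∃ x : V, (x = i ∨ x = j) ∧ (g = .a x ∨ g = .b x ∨ g = .c x ∨ g = .d x)} ∪
    {Gad.f i j, Gad.f j i}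

/-- The vertex set of the Triple Selector gadget associated with a triple `t`. -/
def tripleGadget {V : Type u} (t : Finset V) : Set (Gad V) :=
  {g : Gad V | ∃ x ∈ t, g = .a x ∨ g = .b x ∨ g = .c x ∨ g = .d x}

section Infra
variable {W : Type u} {G : SimpleGraph W} {pref : W → W → ℕ} {M : Set (Sym2 W)}

lemma IsMatching.partner_unique (hM : IsMatching G M) {v w w' : W}
    (h : s(v, w) ∈ M) (h' : s(v, w') ∈ M) : w = w' := by
  by_cases he : s(v, w) = s(v, w')
  · exact Sym2.congr_right.mp he
  · exact absurd (Sym2.mem_mk_left v w') (hM.2 _ h _ h' he v (Sym2.mem_mk_left v w))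

lemma IsMatching.adj (hM : IsMatching G M) {v w : W} (h : s(v, w) ∈ M) : G.Adj v w :=
  G.mem_edgeSet.mp (hM.1 h)

lemma rank_eq_of_mem (hM : IsMatching G M) {v w : W} (h : s(v, w) ∈ M) :
    rank G pref M v = pref v w := by
  have hex : ∃ w : W, s(v, w) ∈ M := ⟨w, h⟩
  rw [rank, dif_pos hex]
  exact congrArg (pref v) (hM.partner_unique hex.choose_spec h)

lemma rank_of_unmatched {v : W} (h : ¬ Matched M v) :
    rank G pref M v = (G.neighborSet v).ncard + 1 := dif_neg h

lemma ncard_neighbor_ge [Finite W] (v : W) (S : Finset W) (hS : ∀ x ∈ S, G.Adj v x) :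
    S.card ≤ (G.neighborSet v).ncard := by
  rw [← Set.ncard_coe_finset]
  exact Set.ncard_le_ncard (fun x hx => hS x (by simpa using hx)) (Set.toFinite _)

lemma rank_unmatched_gt [Finite W] {v : W} (h : ¬ Matched M v) (S : Finset W)
    (hS : ∀ x ∈ S, G.Adj v x) {n : ℕ} (hn : n ≤ S.card) : n < rank G pref M v := by
  rw [rank_of_unmatched h]
  have := ncard_neighbor_ge (G := G) v S hS
  omega

lemma sym2_disj {W : Type u} {a b c d : W} (h1 : a ≠ c) (h2 : a ≠ d) (h3 : b ≠ c)
    (h4 : b ≠ d) : ∀ v, v ∈ s(a, b) → v ∉ s(c, d) := by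
  intro v hv hv'
  rcases Sym2.mem_iff.mp hv with rfl | rfl <;> rcases Sym2.mem_iff.mp hv' with h | h
  · exact h1 h
  · exact h2 h
  · exact h3 h
  · exact h4 h

lemma matching_mod (hM : IsMatching G M) (Rem Add : Set (Sym2 W))
    (hRem : Rem ⊆ M) (hAddE : Add ⊆ G.edgeSet)
    (hAddOld : ∀ e ∈ Add, ∀ v ∈ e, ∀ w, s(v, w) ∈ M → s(v, w) ∈ Rem)
    (hAddDisj : ∀ e ∈ Add, ∀ e' ∈ Add, e ≠ e' → ∀ v, v ∈ e → v ∉ e') :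
    IsMatching G ((M \ Rem) ∪ Add) := by
  constructor
  · rintro e (he | he)
    · exact hM.1 he.1
    · exact hAddE he
  · rintro e (he | he) e' (he' | he') hne v hv hv'
    · exact hM.2 e he.1 e' he'.1 hne v hv hv'
    · obtain ⟨w, rfl⟩ := Sym2.mem_iff_exists.mp hv
      exact he.2 (hAddOld e' he' v hv' w he.1)
    · obtain ⟨w, rfl⟩ := Sym2.mem_iff_exists.mp hv'
      exact he'.2 (hAddOld e he v hv w he'.1)
    · exact hAddDisj e he e' he' hne v hv hv'

lemma exchange [Finite W] (hM : IsPopular G pref M) (Rem Add : Set (Sym2 W))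
    (Plus Minus : Finset W)
    (hRem : Rem ⊆ M)
    (hM' : IsMatching G ((M \ Rem) ∪ Add))
    (hTouchR : ∀ e ∈ Rem, ∀ v, v ∈ e → v ∈ Plus ∨ v ∈ Minus)
    (hTouchA : ∀ e ∈ Add, ∀ v, v ∈ e → v ∈ Plus ∨ v ∈ Minus)
    (hPlus : ∀ v ∈ Plus, rank G pref ((M \ Rem) ∪ Add) v < rank G pref M v)
    (hCard : Minus.card < Plus.card) : False := by
  set M' := (M \ Rem) ∪ Add with hM'def
  have hsame : ∀ v : W, (v ∈ Plus → False) → (v ∈ Minus → False) →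
      rank G pref M' v = rank G pref M v := by
    intro v hvP hvM
    have hiff : ∀ w, s(v, w) ∈ M' ↔ s(v, w) ∈ M := by
      intro w
      constructor
      · rintro (h | h)
        · exact h.1
        · exact absurd (hTouchA _ h v (Sym2.mem_mk_left v w)) (by tauto)
      · intro h
        left
        refine ⟨h, fun hr => ?_⟩
        exact absurd (hTouchR _ hr v (Sym2.mem_mk_left v w)) (by tauto)
    by_cases hmat : Matched M v
    · obtain ⟨w, hw⟩ := hmat
      rw [rank_eq_of_mem hM.1 hw, rank_eq_of_mem hM' ((hiff w).mpr hw)]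
    · have hmat' : ¬ Matched M' v := fun ⟨w, hw⟩ => hmat ⟨w, (hiff w).mp hw⟩
      rw [rank_of_unmatched hmat, rank_of_unmatched hmat']
  have h1 : (Plus : Set W).ncard ≤ vote G pref M' M := by
    apply Set.ncard_le_ncard _ (Set.toFinite _)
    intro v hv
    exact hPlus v (by simpa using hv)
  have h2 : vote G pref M M' ≤ (Minus : Set W).ncard := by
    apply Set.ncard_le_ncard _ (Set.toFinite _)
    intro v hv
    simp only [Set.mem_setOf_eq] at hv
    by_contra hvm
    by_cases hvp : v ∈ Plus
    · exact absurd (hPlus v hvp) (by omega)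
    · rw [hsame v (fun h => hvp h) (fun h => hvm (by simpa using h))] at hv
      omega
  have hpop := hM.2 M' hM'
  rw [Set.ncard_coe_finset] at h1 h2
  omega

lemma augment [Finite W] [DecidableEq W] (hM : IsPopular G pref M) {v w : W} (hadj : G.Adj v w)
    (hv : ¬ Matched M v) (hw : ¬ Matched M w)
    (hpv : pref v w < rank G pref M v) (hpw : pref w v < rank G pref M w) : False := by
  have hne := hadj.ne
  have hM' : IsMatching G ((M \ ∅) ∪ {s(v, w)}) := by
    apply matching_mod hM.1 _ _ (by simp) (by simp [hadj])
    · rintro e he x hx y hy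
      simp only [Set.mem_singleton_iff] at he
      subst he
      rcases Sym2.mem_iff.mp hx with rfl | rfl
      · exact absurd ⟨y, hy⟩ hv
      · exact absurd ⟨y, hy⟩ hw
    · rintro e he e' he' hne'
      simp only [Set.mem_singleton_iff] at he he'
      exact absurd (he.trans he'.symm) hne'
  refine exchange hM ∅ {s(v, w)} ({v, w} : Finset W) (∅ : Finset W) (by simp) hM' (by simp) ?_ ?_ (by
    rw [Finset.card_insert_of_notMem (by simp [hne])]; simp)
  · rintro e he x hx
    simp only [Set.mem_singleton_iff] at he
    subst he
    rcases Sym2.mem_iff.mp hx with rfl | rfl <;> simp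
  · intro x hx
    have hmem : s(v, w) ∈ (M \ ∅) ∪ {s(v, w)} := by simp
    rcases Finset.mem_insert.mp hx with rfl | hx
    · rw [rank_eq_of_mem hM' hmem]
      exact hpv
    · obtain rfl := Finset.mem_singleton.mp hx
      rw [rank_eq_of_mem hM' (Set.mem_union_right _ (Set.mem_singleton_iff.mpr Sym2.eq_swap))]
      exact hpw
end Infra


section Hpart
open Gad

instance gadFinite (V : Type u) [Finite V] : Finite (Gad V) := by
  have hinj : Function.Injective (fun g : Gad V =>
      match g with
      | .a i => ((0 : Fin 6), i, i)
      | .b i => (1, i, i)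
      | .c i => (2, i, i)
      | .d i => (3, i, i)
      | .u i j => (4, i, j)
      | .f i j => (5, i, j)) := by
    intro x y h
    cases x <;> cases y <;> simp_all
  exact Finite.of_injective _ hinj

variable {V : Type u} [LinearOrder V] (R : Reduction V)

instance : Finite R.HV := by
  have := R.ispvc.1
  exact Subtype.finite

namespace Reduction

@[simp] lemma va_eq_va {x y : V} : R.va x = R.va y ↔ x = y := by
  simp [Subtype.ext_iff, Reduction.va]
@[simp] lemma vb_eq_vb {x y : V} : R.vb x = R.vb y ↔ x = y := by
  simp [Subtype.ext_iff, Reduction.vb]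
@[simp] lemma vc_eq_vc {x y : V} : R.vc x = R.vc y ↔ x = y := by
  simp [Subtype.ext_iff, Reduction.vc]
@[simp] lemma vd_eq_vd {x y : V} : R.vd x = R.vd y ↔ x = y := by
  simp [Subtype.ext_iff, Reduction.vd]
@[simp] lemma vu_eq_vu {x y x' y' : V} {h h'} :
    R.vu x y h = R.vu x' y' h' ↔ x = x' ∧ y = y' := by
  simp [Subtype.ext_iff, Reduction.vu]
@[simp] lemma va_eq_vb {x y : V} : R.va x = R.vb y ↔ False := by
  simp [Subtype.ext_iff, Reduction.va, Reduction.vb]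
@[simp] lemma va_eq_vc {x y : V} : R.va x = R.vc y ↔ False := by
  simp [Subtype.ext_iff, Reduction.va, Reduction.vc]
@[simp] lemma va_eq_vd {x y : V} : R.va x = R.vd y ↔ False := by
  simp [Subtype.ext_iff, Reduction.va, Reduction.vd]
@[simp] lemma va_eq_vu {x y z : V} {h} : R.va x = R.vu y z h ↔ False := by
  simp [Subtype.ext_iff, Reduction.va, Reduction.vu]
@[simp] lemma vb_eq_va {x y : V} : R.vb x = R.va y ↔ False := by
  simp [Subtype.ext_iff, Reduction.va, Reduction.vb]
@[simp] lemma vb_eq_vc {x y : V} : R.vb x = R.vc y ↔ False := by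
  simp [Subtype.ext_iff, Reduction.vb, Reduction.vc]
@[simp] lemma vb_eq_vd {x y : V} : R.vb x = R.vd y ↔ False := by
  simp [Subtype.ext_iff, Reduction.vb, Reduction.vd]
@[simp] lemma vb_eq_vu {x y z : V} {h} : R.vb x = R.vu y z h ↔ False := by
  simp [Subtype.ext_iff, Reduction.vb, Reduction.vu]
@[simp] lemma vc_eq_va {x y : V} : R.vc x = R.va y ↔ False := by
  simp [Subtype.ext_iff, Reduction.va, Reduction.vc]
@[simp] lemma vc_eq_vb {x y : V} : R.vc x = R.vb y ↔ False := by
  simp [Subtype.ext_iff, Reduction.vb, Reduction.vc]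
@[simp] lemma vc_eq_vd {x y : V} : R.vc x = R.vd y ↔ False := by
  simp [Subtype.ext_iff, Reduction.vc, Reduction.vd]
@[simp] lemma vc_eq_vu {x y z : V} {h} : R.vc x = R.vu y z h ↔ False := by
  simp [Subtype.ext_iff, Reduction.vc, Reduction.vu]
@[simp] lemma vd_eq_va {x y : V} : R.vd x = R.va y ↔ False := by
  simp [Subtype.ext_iff, Reduction.va, Reduction.vd]
@[simp] lemma vd_eq_vb {x y : V} : R.vd x = R.vb y ↔ False := by
  simp [Subtype.ext_iff, Reduction.vb, Reduction.vd]
@[simp] lemma vd_eq_vc {x y : V} : R.vd x = R.vc y ↔ False := by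
  simp [Subtype.ext_iff, Reduction.vc, Reduction.vd]
@[simp] lemma vd_eq_vu {x y z : V} {h} : R.vd x = R.vu y z h ↔ False := by
  simp [Subtype.ext_iff, Reduction.vd, Reduction.vu]
@[simp] lemma vu_eq_va {x y z : V} {h} : R.vu y z h = R.va x ↔ False := by
  simp [Subtype.ext_iff, Reduction.va, Reduction.vu]
@[simp] lemma vu_eq_vb {x y z : V} {h} : R.vu y z h = R.vb x ↔ False := by
  simp [Subtype.ext_iff, Reduction.vb, Reduction.vu]
@[simp] lemma vu_eq_vc {x y z : V} {h} : R.vu y z h = R.vc x ↔ False := by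
  simp [Subtype.ext_iff, Reduction.vc, Reduction.vu]
@[simp] lemma vu_eq_vd {x y z : V} {h} : R.vu y z h = R.vd x ↔ False := by
  simp [Subtype.ext_iff, Reduction.vd, Reduction.vu]

lemma adj_ab (x : V) : R.H.Adj (R.va x) (R.vb x) :=
  ⟨by simp [Subtype.ext_iff, Reduction.va, Reduction.vb], Or.inl (HBase.ab x)⟩

lemma adj_ac (x : V) : R.H.Adj (R.va x) (R.vc x) :=
  ⟨by simp [Subtype.ext_iff, Reduction.va, Reduction.vc], Or.inl (HBase.ac x)⟩

lemma adj_ad (x : V) : R.H.Adj (R.va x) (R.vd x) :=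
  ⟨by simp [Subtype.ext_iff, Reduction.va, Reduction.vd], Or.inr (HBase.da x)⟩

lemma adj_bc (x : V) : R.H.Adj (R.vb x) (R.vc x) :=
  ⟨by simp [Subtype.ext_iff, Reduction.vb, Reduction.vc], Or.inl (HBase.bc x)⟩

lemma adj_bu (x y : V) (h : R.G.Adj x y) : R.H.Adj (R.vb x) (R.vu x y h) :=
  ⟨by simp [Subtype.ext_iff, Reduction.vb, Reduction.vu], Or.inl (HBase.bu h)⟩

lemma adj_uu (x y : V) (h : R.G.Adj x y) : R.H.Adj (R.vu x y h) (R.vu y x h.symm) :=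
  ⟨by simp [Subtype.ext_iff, Reduction.vu, h.ne], Or.inl (HBase.uu h)⟩

lemma adj_cc {t : Finset V} (ht : t ∈ R.T) {x y : V} (hx : x ∈ t) (hy : y ∈ t)
    (hne : x ≠ y) : R.H.Adj (R.vc x) (R.vc y) :=
  ⟨by simp [Subtype.ext_iff, Reduction.vc, hne], Or.inl (HBase.cc ht hx hy hne)⟩

lemma adj_dd {t : Finset V} (ht : t ∈ R.T) {x y : V} (hx : x ∈ t) (hy : y ∈ t)
    (hne : x ≠ y) : R.H.Adj (R.vd x) (R.vd y) :=
  ⟨by simp [Subtype.ext_iff, Reduction.vd, hne], Or.inl (HBase.dd ht hx hy hne)⟩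


lemma not_in_pair {t : Finset V} {x : V} (ht : t ∈ R.T) (hx : x ∈ t) :
    ∀ e ∈ R.P, x ∉ e := by
  intro e he hxe
  exact R.ispvc.2.2.2.2.2.2.2 x ⟨⟨e, he, hxe⟩, ⟨t, ht, hx⟩⟩

lemma triple_eq {t t' : Finset V} {x : V} (ht : t ∈ R.T) (ht' : t' ∈ R.T)
    (hx : x ∈ t) (hx' : x ∈ t') : t = t' := by
  by_contra hne
  exact R.ispvc.2.2.2.2.2.1 t ht t' ht' hne x hx hx'

lemma adj_a_inv {x : V} {g : R.HV} (h : R.H.Adj (R.va x) g) :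
    g = R.vb x ∨ g = R.vc x ∨ g = R.vd x := by
  obtain ⟨gv, hval⟩ := g
  obtain ⟨-, h | h⟩ := h
  · cases h
    · exact Or.inl rfl
    · exact Or.inr (Or.inl rfl)
  · cases h
    exact Or.inr (Or.inr rfl)

lemma adj_b_inv {x : V} {g : R.HV} (h : R.H.Adj (R.vb x) g) :
    g = R.va x ∨ g = R.vc x ∨ ∃ y, ∃ hy : R.G.Adj x y, g = R.vu x y hy := by
  obtain ⟨gv, hval⟩ := g
  obtain ⟨-, h | h⟩ := h
  · cases h with
    | bc => exact Or.inr (Or.inl rfl)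
    | bu hy => exact Or.inr (Or.inr ⟨_, hy, rfl⟩)
  · cases h
    exact Or.inl rfl

lemma adj_u_inv {x y : V} {hxy : R.G.Adj x y} {g : R.HV}
    (h : R.H.Adj (R.vu x y hxy) g) : g = R.vu y x hxy.symm ∨ g = R.vb x := by
  obtain ⟨gv, hval⟩ := g
  obtain ⟨-, h | h⟩ := h
  · cases h
    exact Or.inl rfl
  · cases h with
    | uu h' => exact Or.inl rfl
    | bu h' => exact Or.inr rfl

lemma adj_c_inv {t : Finset V} {x : V} (ht : t ∈ R.T) (hx : x ∈ t) {g : R.HV}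
    (h : R.H.Adj (R.vc x) g) :
    g = R.va x ∨ g = R.vb x ∨ ∃ y, y ∈ t ∧ y ≠ x ∧ g = R.vc y := by
  obtain ⟨gv, hval⟩ := g
  obtain ⟨-, h | h⟩ := h
  · cases h with
    | cd hp => exact absurd (Sym2.mem_mk_left _ _) (R.not_in_pair ht hx _ hp)
    | cc ht' hi hj hne =>
        obtain rfl := R.triple_eq ht' ht hi hx
        exact Or.inr (Or.inr ⟨_, hj, fun hh => hne hh.symm, rfl⟩)
  · cases h with
    | ac => exact Or.inl rfl
    | bc => exact Or.inr (Or.inl rfl)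
    | fc hp => exact absurd (Sym2.mem_mk_right _ _) (R.not_in_pair ht hx _ hp)
    | cc ht' hi hj hne =>
        obtain rfl := R.triple_eq ht' ht hj hx
        exact Or.inr (Or.inr ⟨_, hi, fun hh => hne hh, rfl⟩)

lemma adj_d_inv {t : Finset V} {x : V} (ht : t ∈ R.T) (hx : x ∈ t) {g : R.HV}
    (h : R.H.Adj (R.vd x) g) :
    g = R.va x ∨ ∃ y, y ∈ t ∧ y ≠ x ∧ g = R.vd y := by
  obtain ⟨gv, hval⟩ := g
  obtain ⟨-, h | h⟩ := h
  · cases h with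
    | da => exact Or.inl rfl
    | df hp => exact absurd (Sym2.mem_mk_left _ _) (R.not_in_pair ht hx _ hp)
    | dd ht' hi hj hne =>
        obtain rfl := R.triple_eq ht' ht hi hx
        exact Or.inr ⟨_, hj, fun hh => hne hh.symm, rfl⟩
  · cases h with
    | cd hp => exact absurd (Sym2.mem_mk_right _ _) (R.not_in_pair ht hx _ hp)
    | dd ht' hi hj hne =>
        obtain rfl := R.triple_eq ht' ht hj hx
        exact Or.inr ⟨_, hi, fun hh => hne hh, rfl⟩

end Reduction
end Hpart


section Struct
open Gad

lemma mem_swap {W : Type u} {M : Set (Sym2 W)} {a b : W} (h : s(a, b) ∈ M) :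
    s(b, a) ∈ M := by rwa [Sym2.eq_swap]

namespace Reduction

variable {V : Type u} [LinearOrder V] (R : Reduction V)

lemma prefH_ab (x : V) : R.prefH (R.va x) (R.vb x) = 1 := R.pref_ab x
lemma prefH_ac (x : V) : R.prefH (R.va x) (R.vc x) = 2 := R.pref_ac x
lemma prefH_ad (x : V) : R.prefH (R.va x) (R.vd x) = 3 := R.pref_ad x
lemma prefH_ba (x : V) : R.prefH (R.vb x) (R.va x) = 1 := R.pref_ba x
lemma prefH_bc (x : V) : R.prefH (R.vb x) (R.vc x) = (R.G.neighborSet x).ncard + 2 :=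
  R.pref_bc x
lemma prefH_ca (x : V) : R.prefH (R.vc x) (R.va x) = 1 := R.pref_ca x
lemma prefH_cb (x : V) : R.prefH (R.vc x) (R.vb x) = 2 := R.pref_cb x
lemma prefH_uu (x y : V) (h : R.G.Adj x y) :
    R.prefH (R.vu x y h) (R.vu y x h.symm) = 1 := R.pref_uu x y h
lemma prefH_ub (x y : V) (h : R.G.Adj x y) :
    R.prefH (R.vu x y h) (R.vb x) = 2 := R.pref_ub x y h
lemma prefH_bu_mem (x y : V) (h : R.G.Adj x y) :
    R.prefH (R.vb x) (R.vu x y h) ∈ Set.Icc 2 ((R.G.neighborSet x).ncard + 1) :=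
  (R.pref_bu x).1 ⟨y, h, rfl⟩

variable {M : Set (Sym2 R.HV)}

/-- Main structural dichotomy: `a_x b_x ∈ M`, or both `a_x d_x ∈ M` and `b_x c_x ∈ M`. -/
lemma ab_or_ad (hM : IsPopular R.H R.prefH M) (x : V) :
    s(R.va x, R.vb x) ∈ M ∨ (s(R.va x, R.vd x) ∈ M ∧ s(R.vb x, R.vc x) ∈ M) := by
  have := R.ispvc.1
  by_cases hab : s(R.va x, R.vb x) ∈ M
  · exact Or.inl hab
  right
  by_cases hbc : s(R.vb x, R.vc x) ∈ M
  · -- b is matched to c; analyze a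
    by_cases hamat : Matched M (R.va x)
    · obtain ⟨w, hw⟩ := hamat
      rcases R.adj_a_inv (hM.1.adj hw) with rfl | rfl | rfl
      · exact absurd hw hab
      · exact absurd (hM.1.partner_unique (mem_swap hw) (mem_swap hbc))
          (by simp [Subtype.ext_iff, Reduction.va, Reduction.vb])
      · exact ⟨hw, hbc⟩
    · -- a unmatched yet b matched to c : not popular
      exfalso
      have hM' : IsMatching R.H ((M \ {s(R.vb x, R.vc x)}) ∪ {s(R.va x, R.vb x)}) := by
        apply matching_mod hM.1 _ _ (by simpa using hbc)
          (by simpa using R.H.mem_edgeSet.mpr (R.adj_ab x))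
        · rintro e he v hv w hw
          simp only [Set.mem_singleton_iff] at he
          subst he
          rcases Sym2.mem_iff.mp hv with rfl | rfl
          · exact absurd ⟨w, hw⟩ hamat
          · obtain rfl := hM.1.partner_unique hbc hw
            rfl
        · rintro e he e' he' hne
          simp only [Set.mem_singleton_iff] at he he'
          exact absurd (he.trans he'.symm) hne
      refine exchange hM _ _ ({R.va x, R.vb x} : Finset R.HV) ({R.vc x} : Finset R.HV)
        (by simpa using hbc) hM' ?_ ?_ ?_ ?_
      · rintro e he v hv
        simp only [Set.mem_singleton_iff] at he
        subst he
        rcases Sym2.mem_iff.mp hv with rfl | rfl <;> simp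
      · rintro e he v hv
        simp only [Set.mem_singleton_iff] at he
        subst he
        rcases Sym2.mem_iff.mp hv with rfl | rfl <;> simp
      · intro v hv
        have hmem : s(R.va x, R.vb x) ∈ (M \ {s(R.vb x, R.vc x)}) ∪ {s(R.va x, R.vb x)} :=
          Set.mem_union_right _ rfl
        rcases Finset.mem_insert.mp hv with rfl | hv
        · rw [rank_eq_of_mem hM' hmem, R.prefH_ab]
          exact rank_unmatched_gt hamat {R.vb x} (by simpa using R.adj_ab x) (by simp)
        · obtain rfl := Finset.mem_singleton.mp hv
          rw [rank_eq_of_mem hM' (mem_swap hmem), R.prefH_ba,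
            rank_eq_of_mem hM.1 hbc, R.prefH_bc]
          omega
      · rw [Finset.card_insert_of_notMem (by simp)]
        simp
  · -- b is not matched to c either: build the improving exchange
    exfalso
    -- a-side data
    have hA : ∃ (RemA : Set (Sym2 R.HV)) (MinA : Finset R.HV), RemA ⊆ M ∧
        (∀ w, s(R.va x, w) ∈ M → s(R.va x, w) ∈ RemA) ∧
        (∀ e ∈ RemA, ∀ v, v ∈ e → v = R.va x ∨ v ∈ MinA) ∧
        1 < rank R.H R.prefH M (R.va x) ∧ MinA.card ≤ 1 := by
      by_cases hamat : Matched M (R.va x)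
      · obtain ⟨w, hw⟩ := hamat
        refine ⟨{s(R.va x, w)}, {w}, by simpa using hw, ?_, ?_, ?_, by simp⟩
        · intro w' hw'
          obtain rfl := hM.1.partner_unique hw hw'
          rfl
        · rintro e he v hv
          simp only [Set.mem_singleton_iff] at he; subst he
          rcases Sym2.mem_iff.mp hv with rfl | rfl
          · exact Or.inl rfl
          · exact Or.inr (by simp)
        · rw [rank_eq_of_mem hM.1 hw]
          rcases R.adj_a_inv (hM.1.adj hw) with rfl | rfl | rfl
          · exact absurd hw hab
          · rw [R.prefH_ac]; omega
          · rw [R.prefH_ad]; omega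
      · refine ⟨∅, ∅, by simp, fun w hw => absurd ⟨w, hw⟩ hamat, by simp, ?_, by simp⟩
        exact rank_unmatched_gt hamat {R.vb x} (by simpa using R.adj_ab x) (by simp)
    -- b-side data
    have hB : ∃ (RemB AddU : Set (Sym2 R.HV)) (PlusU MinB : Finset R.HV),
        RemB ⊆ M ∧ AddU ⊆ R.H.edgeSet ∧
        (∀ e ∈ ({s(R.va x, R.vb x)} ∪ AddU : Set (Sym2 R.HV)), ∀ v, v ∈ e → v ≠ R.va x →
          ∀ w, s(v, w) ∈ M → s(v, w) ∈ RemB) ∧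
        (∀ e ∈ ({s(R.va x, R.vb x)} ∪ AddU : Set (Sym2 R.HV)),
          ∀ e' ∈ ({s(R.va x, R.vb x)} ∪ AddU : Set (Sym2 R.HV)), e ≠ e' →
            ∀ v, v ∈ e → v ∉ e') ∧
        (∀ e ∈ RemB, ∀ v, v ∈ e → v = R.vb x ∨ v ∈ PlusU ∨ v ∈ MinB) ∧
        (∀ v ∈ PlusU, ∀ M'' : Set (Sym2 R.HV), IsMatching R.H M'' → AddU ⊆ M'' →
          rank R.H R.prefH M'' v < rank R.H R.prefH M v) ∧
        1 < rank R.H R.prefH M (R.vb x) ∧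
        MinB.card + 2 ≤ ({R.va x, R.vb x} ∪ PlusU).card ∧
        (∀ e ∈ AddU, ∀ v, v ∈ e → v ∈ PlusU) := by
      by_cases hbmat : Matched M (R.vb x)
      · obtain ⟨w, hw⟩ := hbmat
        rcases R.adj_b_inv (hM.1.adj hw) with rfl | rfl | ⟨y, hy, rfl⟩
        · exact absurd (mem_swap hw) hab
        · exact absurd hw hbc
        · have hxy := hy.ne
          have huu : s(R.vu x y hy, R.vu y x hy.symm) ∉ M := fun h =>
            absurd (hM.1.partner_unique (mem_swap hw) h) (by simp)
          have huM : ∀ w', s(R.vu x y hy, w') ∈ M → w' = R.vb x := by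
            intro w' hw'
            rcases R.adj_u_inv (hM.1.adj hw') with rfl | rfl
            · exact absurd hw' huu
            · rfl
          have hbu := R.prefH_bu_mem x y hy
          rw [Set.mem_Icc] at hbu
          have hrb : 1 < rank R.H R.prefH M (R.vb x) := by
            rw [rank_eq_of_mem hM.1 hw]; omega
          have hru : rank R.H R.prefH M (R.vu x y hy) = 2 := by
            rw [rank_eq_of_mem hM.1 (mem_swap hw), R.prefH_ub]
          have hPlusU : ∀ (MinB : Finset R.HV) (hu'r : 1 < rank R.H R.prefH M (R.vu y x hy.symm)),
              ∀ v ∈ ({R.vu x y hy, R.vu y x hy.symm} : Finset R.HV),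
              ∀ M'' : Set (Sym2 R.HV), IsMatching R.H M'' →
              ({s(R.vu x y hy, R.vu y x hy.symm)} : Set (Sym2 R.HV)) ⊆ M'' →
              rank R.H R.prefH M'' v < rank R.H R.prefH M v := by
            intro _ hu'r v hv M'' hM'' hsub
            have hm : s(R.vu x y hy, R.vu y x hy.symm) ∈ M'' := hsub rfl
            rcases Finset.mem_insert.mp hv with rfl | hv
            · rw [rank_eq_of_mem hM'' hm, R.prefH_uu, hru]; omega
            · obtain rfl := Finset.mem_singleton.mp hv
              rw [rank_eq_of_mem hM'' (mem_swap hm), R.prefH_uu]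
              exact hu'r
          have hne1 : ∀ v, v ∈ s(R.va x, R.vb x) →
              v ∉ s(R.vu x y hy, R.vu y x hy.symm) := by
            intro v hv hv'
            rcases Sym2.mem_iff.mp hv with rfl | rfl <;>
              rcases Sym2.mem_iff.mp hv' with h | h <;> simp at h
          have hdisj : ∀ e ∈ ({s(R.va x, R.vb x)} ∪
                {s(R.vu x y hy, R.vu y x hy.symm)} : Set (Sym2 R.HV)),
              ∀ e' ∈ ({s(R.va x, R.vb x)} ∪
                {s(R.vu x y hy, R.vu y x hy.symm)} : Set (Sym2 R.HV)), e ≠ e' →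
              ∀ v, v ∈ e → v ∉ e' := by
            rintro e (rfl | rfl) e' (rfl | rfl) hne v hv hv'
            · exact hne rfl
            · exact hne1 v hv hv'
            · exact hne1 v hv' hv
            · exact hne rfl
          have hcard4 : ({R.va x, R.vb x} ∪
              ({R.vu x y hy, R.vu y x hy.symm} : Finset R.HV)).card = 4 := by
            rw [Finset.card_union_of_disjoint (by
                rw [Finset.disjoint_left]
                intro v hv hv'
                rcases Finset.mem_insert.mp hv with rfl | hv <;>
                  [skip; obtain rfl := Finset.mem_singleton.mp hv] <;>
                  rcases Finset.mem_insert.mp hv' with h | h <;>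
                  first
                  | (exact absurd h (by simp))
                  | (exact absurd (Finset.mem_singleton.mp h) (by simp))),
              Finset.card_insert_of_notMem (by simp),
              Finset.card_insert_of_notMem (by simp [hxy]),
              Finset.card_singleton, Finset.card_singleton]
          have hu'cases : (¬ Matched M (R.vu y x hy.symm)) ∨ s(R.vu y x hy.symm, R.vb y) ∈ M := by
            by_cases h : Matched M (R.vu y x hy.symm)
            · obtain ⟨w', hw'⟩ := h
              rcases R.adj_u_inv (hM.1.adj hw') with rfl | rfl
              · exact absurd (mem_swap hw') huu
              · exact Or.inr hw'
            · exact Or.inl h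
          rcases hu'cases with hfree | hby
          · refine ⟨{s(R.vb x, R.vu x y hy)}, {s(R.vu x y hy, R.vu y x hy.symm)},
              {R.vu x y hy, R.vu y x hy.symm}, ∅, by simpa using hw,
              by simpa using R.H.mem_edgeSet.mpr (R.adj_uu x y hy), ?_, hdisj, ?_,
              hPlusU ∅ (rank_unmatched_gt hfree {R.vu x y hy}
                (by simpa using (R.adj_uu x y hy).symm) (by simp)), hrb,
              by rw [hcard4]; simp, ?_⟩
            · rintro e (rfl | rfl) v hv hva w' hw'
              · rcases Sym2.mem_iff.mp hv with rfl | rfl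
                · exact absurd rfl hva
                · obtain rfl := hM.1.partner_unique hw hw'
                  rfl
              · rcases Sym2.mem_iff.mp hv with rfl | rfl
                · obtain rfl := huM w' hw'
                  exact Set.mem_singleton_iff.mpr Sym2.eq_swap
                · exact absurd ⟨w', hw'⟩ hfree
            · rintro e (rfl : e = _) v hv
              rcases Sym2.mem_iff.mp hv with rfl | rfl
              · exact Or.inl rfl
              · exact Or.inr (Or.inl (by simp))
            · rintro e (rfl : e = _) v hv
              rcases Sym2.mem_iff.mp hv with rfl | rfl <;> simp
          · have hu'r : 1 < rank R.H R.prefH M (R.vu y x hy.symm) := by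
              rw [rank_eq_of_mem hM.1 hby, R.prefH_ub]; omega
            refine ⟨{s(R.vb x, R.vu x y hy), s(R.vu y x hy.symm, R.vb y)},
              {s(R.vu x y hy, R.vu y x hy.symm)},
              {R.vu x y hy, R.vu y x hy.symm}, {R.vb y}, ?_,
              by simpa using R.H.mem_edgeSet.mpr (R.adj_uu x y hy), ?_, hdisj, ?_,
              hPlusU {R.vb y} hu'r, hrb, by rw [hcard4]; simp, ?_⟩
            · rintro e (rfl | rfl)
              · exact hw
              · exact hby
            · rintro e (rfl | rfl) v hv hva w' hw'
              · rcases Sym2.mem_iff.mp hv with rfl | rfl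
                · exact absurd rfl hva
                · obtain rfl := hM.1.partner_unique hw hw'
                  exact Or.inl rfl
              · rcases Sym2.mem_iff.mp hv with rfl | rfl
                · obtain rfl := huM w' hw'
                  exact Or.inl (Sym2.eq_swap)
                · obtain rfl := hM.1.partner_unique hby hw'
                  exact Or.inr rfl
            · rintro e (rfl | rfl) v hv
              · rcases Sym2.mem_iff.mp hv with rfl | rfl
                · exact Or.inl rfl
                · exact Or.inr (Or.inl (by simp))
              · rcases Sym2.mem_iff.mp hv with rfl | rfl
                · exact Or.inr (Or.inl (by simp))
                · exact Or.inr (Or.inr (by simp))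
            · rintro e (rfl : e = _) v hv
              rcases Sym2.mem_iff.mp hv with rfl | rfl <;> simp
      · refine ⟨∅, ∅, ∅, ∅, by simp, by simp, ?_, ?_, by simp, by simp, ?_, ?_, by simp⟩
        · rintro e (rfl | h) v hv hva w hw
          · rcases Sym2.mem_iff.mp hv with rfl | rfl
            · exact absurd rfl hva
            · exact absurd ⟨w, hw⟩ hbmat
          · simp at h
        · rintro e (rfl | h) e' (rfl | h') hne v hv hv'
          · exact hne rfl
          all_goals simp_all
        · exact rank_unmatched_gt hbmat {R.va x} (by simpa using (R.adj_ab x).symm) (by simp)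
        · rw [Finset.union_empty, Finset.card_insert_of_notMem (by simp)]
          simp
    -- combine
    obtain ⟨RemA, MinA, hA1, hA2, hA3, hA4, hA5⟩ := hA
    obtain ⟨RemB, AddU, PlusU, MinB, hB1, hB2, hB3, hB4, hB5, hB6, hB7, hB8, hB9⟩ := hB
    have hRemM : (RemA ∪ RemB : Set (Sym2 R.HV)) ⊆ M := Set.union_subset hA1 hB1
    have hM' : IsMatching R.H ((M \ (RemA ∪ RemB)) ∪ ({s(R.va x, R.vb x)} ∪ AddU)) := by
      apply matching_mod hM.1 _ _ hRemM
      · rintro e (rfl | he)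
        · exact R.H.mem_edgeSet.mpr (R.adj_ab x)
        · exact hB2 he
      · intro e he v hv w hw
        by_cases hva : v = R.va x
        · subst hva
          exact Set.mem_union_left _ (hA2 w hw)
        · exact Set.mem_union_right _ (hB3 e he v hv hva w hw)
      · exact hB4
    refine exchange hM _ _ ({R.va x, R.vb x} ∪ PlusU) (MinA ∪ MinB) hRemM hM' ?_ ?_ ?_ ?_
    · rintro e (he | he) v hv
      · rcases hA3 e he v hv with rfl | h
        · exact Or.inl (by simp)
        · exact Or.inr (Finset.mem_union_left _ h)
      · rcases hB5 e he v hv with rfl | h | h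
        · exact Or.inl (by simp)
        · exact Or.inl (Finset.mem_union_right _ h)
        · exact Or.inr (Finset.mem_union_right _ h)
    · rintro e (rfl | he) v hv
      · rcases Sym2.mem_iff.mp hv with rfl | rfl
        · exact Or.inl (by simp)
        · exact Or.inl (by simp)
      · exact Or.inl (Finset.mem_union_right _ (hB9 e he v hv))
    · intro v hv
      have habM' : s(R.va x, R.vb x) ∈ (M \ (RemA ∪ RemB)) ∪ ({s(R.va x, R.vb x)} ∪ AddU) :=
        Set.mem_union_right _ (Set.mem_union_left _ rfl)
      rcases Finset.mem_union.mp hv with hv | hv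
      · rcases Finset.mem_insert.mp hv with rfl | hv
        · rw [rank_eq_of_mem hM' habM', R.prefH_ab]
          exact hA4
        · obtain rfl := Finset.mem_singleton.mp hv
          rw [rank_eq_of_mem hM' (mem_swap habM'), R.prefH_ba]
          exact hB7
      · exact hB6 v hv _ hM' (fun e he => Set.mem_union_right _ (Set.mem_union_right _ he))
    · have h1 := Finset.card_union_le MinA MinB
      omega


/-- No two `G`-adjacent "closed" gadgets (`a–d` and `b–c` both matched). -/
lemma not_two_closed (hM : IsPopular R.H R.prefH M) {x y : V} (hxy : R.G.Adj x y)
    (hadx : s(R.va x, R.vd x) ∈ M) (hbcx : s(R.vb x, R.vc x) ∈ M)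
    (hady : s(R.va y, R.vd y) ∈ M) (hbcy : s(R.vb y, R.vc y) ∈ M) : False := by
  have := R.ispvc.1
  have hne := hxy.ne
  obtain ⟨RemU, hRemU_sub, hRemU_u, hRemU_u', hRemU_touch⟩ :
      ∃ RemU : Set (Sym2 R.HV), RemU ⊆ M ∧
        (∀ w, s(R.vu x y hxy, w) ∈ M → s(R.vu x y hxy, w) ∈ RemU) ∧
        (∀ w, s(R.vu y x hxy.symm, w) ∈ M → s(R.vu y x hxy.symm, w) ∈ RemU) ∧
        (∀ e ∈ RemU, ∀ v, v ∈ e → v = R.vu x y hxy ∨ v = R.vu y x hxy.symm) := by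
    have hux : ∀ w, s(R.vu x y hxy, w) ∈ M → w = R.vu y x hxy.symm := by
      intro w hw
      rcases R.adj_u_inv (hM.1.adj hw) with rfl | rfl
      · rfl
      · exact absurd (hM.1.partner_unique hbcx (mem_swap hw)) (by simp)
    have huy : ∀ w, s(R.vu y x hxy.symm, w) ∈ M → w = R.vu x y hxy := by
      intro w hw
      rcases R.adj_u_inv (hM.1.adj hw) with rfl | rfl
      · rfl
      · exact absurd (hM.1.partner_unique hbcy (mem_swap hw)) (by simp)
    by_cases huu : s(R.vu x y hxy, R.vu y x hxy.symm) ∈ M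
    · refine ⟨{s(R.vu x y hxy, R.vu y x hxy.symm)}, by simpa using huu, ?_, ?_, ?_⟩
      · intro w hw
        obtain rfl := hux w hw
        rfl
      · intro w hw
        obtain rfl := huy w hw
        exact Set.mem_singleton_iff.mpr Sym2.eq_swap
      · rintro e (rfl : e = _) v hv
        exact Sym2.mem_iff.mp hv
    · refine ⟨∅, by simp, ?_, ?_, by simp⟩
      · intro w hw
        obtain rfl := hux w hw
        exact absurd hw huu
      · intro w hw
        obtain rfl := huy w hw
        exact absurd (mem_swap hw) huu
  have hM' : IsMatching R.H ((M \
        (({s(R.va x, R.vd x), s(R.vb x, R.vc x), s(R.va y, R.vd y), s(R.vb y, R.vc y)} :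
          Set (Sym2 R.HV)) ∪ RemU)) ∪
      ({s(R.va x, R.vc x), s(R.vb x, R.vu x y hxy), s(R.va y, R.vc y),
        s(R.vb y, R.vu y x hxy.symm)} : Set (Sym2 R.HV))) := by
    apply matching_mod hM.1
    · rintro e ((rfl | rfl | rfl | rfl) | he)
      · exact hadx
      · exact hbcx
      · exact hady
      · exact hbcy
      · exact hRemU_sub he
    · rintro e (rfl | rfl | rfl | rfl)
      · exact R.H.mem_edgeSet.mpr (R.adj_ac x)
      · exact R.H.mem_edgeSet.mpr (R.adj_bu x y hxy)
      · exact R.H.mem_edgeSet.mpr (R.adj_ac y)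
      · exact R.H.mem_edgeSet.mpr (R.adj_bu y x hxy.symm)
    · rintro e (rfl | rfl | rfl | rfl) v hv w hw <;> rcases Sym2.mem_iff.mp hv with rfl | rfl
      · obtain rfl := hM.1.partner_unique hadx hw
        exact Set.mem_union_left _ (Set.mem_insert _ _)
      · obtain rfl := hM.1.partner_unique (mem_swap hbcx) hw
        exact Set.mem_union_left _
          (Set.mem_insert_of_mem _ (Set.mem_insert_iff.mpr (Or.inl Sym2.eq_swap)))
      · obtain rfl := hM.1.partner_unique hbcx hw
        exact Set.mem_union_left _ (Set.mem_insert_of_mem _ (Set.mem_insert _ _))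
      · exact Set.mem_union_right _ (hRemU_u w hw)
      · obtain rfl := hM.1.partner_unique hady hw
        exact Set.mem_union_left _
          (Set.mem_insert_of_mem _ (Set.mem_insert_of_mem _ (Set.mem_insert _ _)))
      · obtain rfl := hM.1.partner_unique (mem_swap hbcy) hw
        exact Set.mem_union_left _ (Set.mem_insert_of_mem _ (Set.mem_insert_of_mem _
          (Set.mem_insert_of_mem _ (Set.mem_singleton_iff.mpr Sym2.eq_swap))))
      · obtain rfl := hM.1.partner_unique hbcy hw
        exact Set.mem_union_left _ (Set.mem_insert_of_mem _ (Set.mem_insert_of_mem _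
          (Set.mem_insert_of_mem _ rfl)))
      · exact Set.mem_union_right _ (hRemU_u' w hw)
    · rintro e (rfl | rfl | rfl | rfl) e' (rfl | rfl | rfl | rfl) hne' v hv hv'
      · exact hne' rfl
      · exact sym2_disj (by simp [hne, Ne.symm hne]) (by simp [hne, Ne.symm hne]) (by simp [hne, Ne.symm hne]) (by simp [hne, Ne.symm hne]) v hv hv'
      · exact sym2_disj (by simp [hne, Ne.symm hne]) (by simp [hne, Ne.symm hne]) (by simp [hne, Ne.symm hne]) (by simp [hne, Ne.symm hne]) v hv hv'
      · exact sym2_disj (by simp [hne, Ne.symm hne]) (by simp [hne, Ne.symm hne]) (by simp [hne, Ne.symm hne]) (by simp [hne, Ne.symm hne]) v hv hv'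
      · exact sym2_disj (by simp [hne, Ne.symm hne]) (by simp [hne, Ne.symm hne]) (by simp [hne, Ne.symm hne]) (by simp [hne, Ne.symm hne]) v hv hv'
      · exact hne' rfl
      · exact sym2_disj (by simp [hne, Ne.symm hne]) (by simp [hne, Ne.symm hne]) (by simp [hne, Ne.symm hne]) (by simp [hne, Ne.symm hne]) v hv hv'
      · exact sym2_disj (by simp [hne, Ne.symm hne]) (by simp [hne, Ne.symm hne]) (by simp [hne, Ne.symm hne]) (by simp [hne, Ne.symm hne]) v hv hv'
      · exact sym2_disj (by simp [hne, Ne.symm hne]) (by simp [hne, Ne.symm hne]) (by simp [hne, Ne.symm hne]) (by simp [hne, Ne.symm hne]) v hv hv'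
      · exact sym2_disj (by simp [hne, Ne.symm hne]) (by simp [hne, Ne.symm hne]) (by simp [hne, Ne.symm hne]) (by simp [hne, Ne.symm hne]) v hv hv'
      · exact hne' rfl
      · exact sym2_disj (by simp [hne, Ne.symm hne]) (by simp [hne, Ne.symm hne]) (by simp [hne, Ne.symm hne]) (by simp [hne, Ne.symm hne]) v hv hv'
      · exact sym2_disj (by simp [hne, Ne.symm hne]) (by simp [hne, Ne.symm hne]) (by simp [hne, Ne.symm hne]) (by simp [hne, Ne.symm hne]) v hv hv'
      · exact sym2_disj (by simp [hne, Ne.symm hne]) (by simp [hne, Ne.symm hne]) (by simp [hne, Ne.symm hne]) (by simp [hne, Ne.symm hne]) v hv hv'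
      · exact sym2_disj (by simp [hne, Ne.symm hne]) (by simp [hne, Ne.symm hne]) (by simp [hne, Ne.symm hne]) (by simp [hne, Ne.symm hne]) v hv hv'
      · exact hne' rfl
  have hRem : (({s(R.va x, R.vd x), s(R.vb x, R.vc x), s(R.va y, R.vd y), s(R.vb y, R.vc y)} :
      Set (Sym2 R.HV)) ∪ RemU) ⊆ M := by
    rintro e ((rfl | rfl | rfl | rfl) | he)
    · exact hadx
    · exact hbcx
    · exact hady
    · exact hbcy
    · exact hRemU_sub he
  refine exchange hM _ _
    ({R.va x, R.vb x, R.vc x, R.va y, R.vb y, R.vc y} : Finset R.HV)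
    ({R.vd x, R.vd y, R.vu x y hxy, R.vu y x hxy.symm} : Finset R.HV)
    hRem hM' ?_ ?_ ?_ ?_
  · rintro e ((rfl | rfl | rfl | rfl) | he) v hv
    · rcases Sym2.mem_iff.mp hv with rfl | rfl
      · exact Or.inl (by simp)
      · exact Or.inr (by simp)
    · rcases Sym2.mem_iff.mp hv with rfl | rfl
      · exact Or.inl (by simp)
      · exact Or.inl (by simp)
    · rcases Sym2.mem_iff.mp hv with rfl | rfl
      · exact Or.inl (by simp)
      · exact Or.inr (by simp)
    · rcases Sym2.mem_iff.mp hv with rfl | rfl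
      · exact Or.inl (by simp)
      · exact Or.inl (by simp)
    · rcases hRemU_touch e he v hv with rfl | rfl
      · exact Or.inr (by simp)
      · exact Or.inr (by simp)
  · rintro e (rfl | rfl | rfl | rfl) v hv <;> rcases Sym2.mem_iff.mp hv with rfl | rfl
    · exact Or.inl (by simp)
    · exact Or.inl (by simp)
    · exact Or.inl (by simp)
    · exact Or.inr (by simp)
    · exact Or.inl (by simp)
    · exact Or.inl (by simp)
    · exact Or.inl (by simp)
    · exact Or.inr (by simp)
  · intro v hv
    have m1 : s(R.va x, R.vc x) ∈ (M \ (({s(R.va x, R.vd x), s(R.vb x, R.vc x), s(R.va y, R.vd y), s(R.vb y, R.vc y)} :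
          Set (Sym2 R.HV)) ∪ RemU)) ∪
      ({s(R.va x, R.vc x), s(R.vb x, R.vu x y hxy), s(R.va y, R.vc y),
        s(R.vb y, R.vu y x hxy.symm)} : Set (Sym2 R.HV)) := Set.mem_union_right _ (Set.mem_insert _ _)
    have m2 : s(R.vb x, R.vu x y hxy) ∈ (M \ (({s(R.va x, R.vd x), s(R.vb x, R.vc x), s(R.va y, R.vd y), s(R.vb y, R.vc y)} :
          Set (Sym2 R.HV)) ∪ RemU)) ∪
      ({s(R.va x, R.vc x), s(R.vb x, R.vu x y hxy), s(R.va y, R.vc y),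
        s(R.vb y, R.vu y x hxy.symm)} : Set (Sym2 R.HV)) :=
      Set.mem_union_right _ (Set.mem_insert_of_mem _ (Set.mem_insert _ _))
    have m3 : s(R.va y, R.vc y) ∈ (M \ (({s(R.va x, R.vd x), s(R.vb x, R.vc x), s(R.va y, R.vd y), s(R.vb y, R.vc y)} :
          Set (Sym2 R.HV)) ∪ RemU)) ∪
      ({s(R.va x, R.vc x), s(R.vb x, R.vu x y hxy), s(R.va y, R.vc y),
        s(R.vb y, R.vu y x hxy.symm)} : Set (Sym2 R.HV)) :=
      Set.mem_union_right _
        (Set.mem_insert_of_mem _ (Set.mem_insert_of_mem _ (Set.mem_insert _ _)))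
    have m4 : s(R.vb y, R.vu y x hxy.symm) ∈ (M \ (({s(R.va x, R.vd x), s(R.vb x, R.vc x), s(R.va y, R.vd y), s(R.vb y, R.vc y)} :
          Set (Sym2 R.HV)) ∪ RemU)) ∪
      ({s(R.va x, R.vc x), s(R.vb x, R.vu x y hxy), s(R.va y, R.vc y),
        s(R.vb y, R.vu y x hxy.symm)} : Set (Sym2 R.HV)) :=
      Set.mem_union_right _ (Set.mem_insert_of_mem _ (Set.mem_insert_of_mem _
        (Set.mem_insert_of_mem _ rfl)))
    have hbux := R.prefH_bu_mem x y hxy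
    have hbuy := R.prefH_bu_mem y x hxy.symm
    rw [Set.mem_Icc] at hbux hbuy
    rcases Finset.mem_insert.mp hv with rfl | hv
    · rw [rank_eq_of_mem hM' m1, rank_eq_of_mem hM.1 hadx, R.prefH_ac, R.prefH_ad]
      omega
    rcases Finset.mem_insert.mp hv with rfl | hv
    · rw [rank_eq_of_mem hM' m2, rank_eq_of_mem hM.1 hbcx, R.prefH_bc]
      omega
    rcases Finset.mem_insert.mp hv with rfl | hv
    · rw [rank_eq_of_mem hM' (mem_swap m1), rank_eq_of_mem hM.1 (mem_swap hbcx),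
        R.prefH_ca, R.prefH_cb]
      omega
    rcases Finset.mem_insert.mp hv with rfl | hv
    · rw [rank_eq_of_mem hM' m3, rank_eq_of_mem hM.1 hady, R.prefH_ac, R.prefH_ad]
      omega
    rcases Finset.mem_insert.mp hv with rfl | hv
    · rw [rank_eq_of_mem hM' m4, rank_eq_of_mem hM.1 hbcy, R.prefH_bc]
      omega
    obtain rfl := Finset.mem_singleton.mp hv
    rw [rank_eq_of_mem hM' (mem_swap m3), rank_eq_of_mem hM.1 (mem_swap hbcy),
      R.prefH_ca, R.prefH_cb]
    omega
  · have hcm : ({R.vd x, R.vd y, R.vu x y hxy, R.vu y x hxy.symm} : Finset R.HV).card = 4 := by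
      rw [Finset.card_insert_of_notMem (by simp [hne, Ne.symm hne]),
        Finset.card_insert_of_notMem (by simp),
        Finset.card_insert_of_notMem (by simp [hne, Ne.symm hne]),
        Finset.card_singleton]
    have hcp : ({R.va x, R.vb x, R.vc x, R.va y, R.vb y, R.vc y} : Finset R.HV).card = 6 := by
      rw [Finset.card_insert_of_notMem (by simp [hne, Ne.symm hne]),
        Finset.card_insert_of_notMem (by simp [hne, Ne.symm hne]),
        Finset.card_insert_of_notMem (by simp [hne, Ne.symm hne]),
        Finset.card_insert_of_notMem (by simp [hne, Ne.symm hne]),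
        Finset.card_insert_of_notMem (by simp),
        Finset.card_singleton]
    rw [hcm, hcp]
    omega


lemma triple_sorted (ht : t ∈ R.T) : ∃ i j k : V, i < j ∧ j < k ∧ t = {i, j, k} := by
  obtain ⟨a, b, c, hab, hac, hbc, rfl⟩ := Finset.card_eq_three.mp (R.ispvc.2.2.2.1 t ht)
  rcases lt_trichotomy a b with h1 | h1 | h1
  · rcases lt_trichotomy b c with h2 | h2 | h2
    · exact ⟨a, b, c, h1, h2, rfl⟩
    · exact absurd h2 hbc
    · rcases lt_trichotomy a c with h3 | h3 | h3
      · exact ⟨a, c, b, h3, h2, by ext v; simp; tauto⟩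
      · exact absurd h3 hac
      · exact ⟨c, a, b, h3, h1, by ext v; simp; tauto⟩
  · exact absurd h1 hab
  · rcases lt_trichotomy a c with h2 | h2 | h2
    · exact ⟨b, a, c, h1, h2, by ext v; simp; tauto⟩
    · exact absurd h2 hac
    · rcases lt_trichotomy b c with h3 | h3 | h3
      · exact ⟨b, c, a, h3, h2, by ext v; simp; tauto⟩
      · exact absurd h3 hbc
      · exact ⟨c, b, a, h3, h1, by ext v; simp; tauto⟩

lemma rank_vc_gt (hM : IsMatching R.H M) (hfree : ¬ Matched M (R.vc x))
    {t : Finset V} (ht : t ∈ R.T) (hx : x ∈ t) (hy : y ∈ t) (hz : z ∈ t)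
    (hxy : x ≠ y) (hxz : x ≠ z) (hyz : y ≠ z) :
    4 < rank R.H R.prefH M (R.vc x) := by
  have := R.ispvc.1
  refine rank_unmatched_gt hfree {R.va x, R.vb x, R.vc y, R.vc z} ?_ ?_
  · intro g hg
    rcases Finset.mem_insert.mp hg with rfl | hg
    · exact (R.adj_ac x).symm
    rcases Finset.mem_insert.mp hg with rfl | hg
    · exact (R.adj_bc x).symm
    rcases Finset.mem_insert.mp hg with rfl | hg
    · exact R.adj_cc ht hx hy hxy
    · obtain rfl := Finset.mem_singleton.mp hg
      exact R.adj_cc ht hx hz hxz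
  · rw [Finset.card_insert_of_notMem (by simp),
      Finset.card_insert_of_notMem (by simp),
      Finset.card_insert_of_notMem (by simp [hyz]),
      Finset.card_singleton]

lemma rank_vd_gt (hM : IsMatching R.H M) (hfree : ¬ Matched M (R.vd x))
    {t : Finset V} (ht : t ∈ R.T) (hx : x ∈ t) (hy : y ∈ t) (hz : z ∈ t)
    (hxy : x ≠ y) (hxz : x ≠ z) (hyz : y ≠ z) :
    3 < rank R.H R.prefH M (R.vd x) := by
  have := R.ispvc.1
  refine rank_unmatched_gt hfree {R.va x, R.vd y, R.vd z} ?_ ?_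
  · intro g hg
    rcases Finset.mem_insert.mp hg with rfl | hg
    · exact (R.adj_ad x).symm
    rcases Finset.mem_insert.mp hg with rfl | hg
    · exact R.adj_dd ht hx hy hxy
    · obtain rfl := Finset.mem_singleton.mp hg
      exact R.adj_dd ht hx hz hxz
  · rw [Finset.card_insert_of_notMem (by simp),
      Finset.card_insert_of_notMem (by simp [hyz]),
      Finset.card_singleton]

/-- The double-rotation exchange used in the all-`a b` case. -/
lemma rot_exchange (hM : IsPopular R.H R.prefH M) {t : Finset V} (ht : t ∈ R.T)
    {cp cq cr dp dq dr : V}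
    (hcq : cq ∈ t) (hcr : cr ∈ t) (hdq : dq ∈ t) (hdr : dr ∈ t)
    (hcqr : cq ≠ cr) (hdqr : dq ≠ dr)
    (hc : s(R.vc cq, R.vc cp) ∈ M) (hcfree : ¬ Matched M (R.vc cr))
    (hd : s(R.vd dq, R.vd dp) ∈ M) (hdfree : ¬ Matched M (R.vd dr))
    (hcpref : R.prefH (R.vc cq) (R.vc cr) < R.prefH (R.vc cq) (R.vc cp))
    (hcpref2 : R.prefH (R.vc cr) (R.vc cq) ≤ 4)
    (hdpref : R.prefH (R.vd dq) (R.vd dr) < R.prefH (R.vd dq) (R.vd dp))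
    (hdpref2 : R.prefH (R.vd dr) (R.vd dq) ≤ 3)
    (hcrrank : 4 < rank R.H R.prefH M (R.vc cr))
    (hdrrank : 3 < rank R.H R.prefH M (R.vd dr)) : False := by
  have := R.ispvc.1
  have hcqE : ∀ w, s(R.vc cq, w) ∈ M → w = R.vc cp := fun w hw => (hM.1.partner_unique hc hw).symm
  have hdqE : ∀ w, s(R.vd dq, w) ∈ M → w = R.vd dp := fun w hw => (hM.1.partner_unique hd hw).symm
  have hM' : IsMatching R.H ((M \
      ({s(R.vc cq, R.vc cp), s(R.vd dq, R.vd dp)} : Set (Sym2 R.HV))) ∪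
      ({s(R.vc cq, R.vc cr), s(R.vd dq, R.vd dr)} : Set (Sym2 R.HV))) := by
    apply matching_mod hM.1
    · rintro e (rfl | rfl)
      · exact hc
      · exact hd
    · rintro e (rfl | rfl)
      · exact R.H.mem_edgeSet.mpr (R.adj_cc ht hcq hcr hcqr)
      · exact R.H.mem_edgeSet.mpr (R.adj_dd ht hdq hdr hdqr)
    · rintro e (rfl | rfl) v hv w hw <;> rcases Sym2.mem_iff.mp hv with rfl | rfl
      · obtain rfl := hcqE w hw
        exact Set.mem_insert _ _
      · exact absurd ⟨w, hw⟩ hcfree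
      · obtain rfl := hdqE w hw
        exact Set.mem_insert_of_mem _ rfl
      · exact absurd ⟨w, hw⟩ hdfree
    · rintro e (rfl | rfl) e' (rfl | rfl) hne' v hv hv'
      · exact hne' rfl
      · exact sym2_disj (by simp) (by simp) (by simp) (by simp) v hv hv'
      · exact sym2_disj (by simp) (by simp) (by simp) (by simp) v hv hv'
      · exact hne' rfl
  have m1 : s(R.vc cq, R.vc cr) ∈ (M \
      ({s(R.vc cq, R.vc cp), s(R.vd dq, R.vd dp)} : Set (Sym2 R.HV))) ∪
      ({s(R.vc cq, R.vc cr), s(R.vd dq, R.vd dr)} : Set (Sym2 R.HV)) :=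
    Set.mem_union_right _ (Set.mem_insert _ _)
  have m2 : s(R.vd dq, R.vd dr) ∈ (M \
      ({s(R.vc cq, R.vc cp), s(R.vd dq, R.vd dp)} : Set (Sym2 R.HV))) ∪
      ({s(R.vc cq, R.vc cr), s(R.vd dq, R.vd dr)} : Set (Sym2 R.HV)) :=
    Set.mem_union_right _ (Set.mem_insert_of_mem _ rfl)
  refine exchange hM _ _
    ({R.vc cq, R.vc cr, R.vd dq, R.vd dr} : Finset R.HV)
    ({R.vc cp, R.vd dp} : Finset R.HV)
    (by rintro e (rfl | rfl); exacts [hc, hd]) hM' ?_ ?_ ?_ ?_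
  · rintro e (rfl | rfl) v hv <;> rcases Sym2.mem_iff.mp hv with rfl | rfl
    · exact Or.inl (by simp)
    · exact Or.inr (by simp)
    · exact Or.inl (by simp)
    · exact Or.inr (by simp)
  · rintro e (rfl | rfl) v hv <;> rcases Sym2.mem_iff.mp hv with rfl | rfl
    · exact Or.inl (by simp)
    · exact Or.inl (by simp)
    · exact Or.inl (by simp)
    · exact Or.inl (by simp)
  · intro v hv
    rcases Finset.mem_insert.mp hv with rfl | hv
    · rw [rank_eq_of_mem hM' m1, rank_eq_of_mem hM.1 hc]
      exact hcpref
    rcases Finset.mem_insert.mp hv with rfl | hv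
    · rw [rank_eq_of_mem hM' (mem_swap m1)]
      omega
    rcases Finset.mem_insert.mp hv with rfl | hv
    · rw [rank_eq_of_mem hM' m2, rank_eq_of_mem hM.1 hd]
      exact hdpref
    · obtain rfl := Finset.mem_singleton.mp hv
      rw [rank_eq_of_mem hM' (mem_swap m2)]
      omega
  · have h1 : ({R.vc cp, R.vd dp} : Finset R.HV).card = 2 := by
      rw [Finset.card_insert_of_notMem (by simp), Finset.card_singleton]
    have h2 : ({R.vc cq, R.vc cr, R.vd dq, R.vd dr} : Finset R.HV).card = 4 := by
      rw [Finset.card_insert_of_notMem (by simp [hcqr]),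
        Finset.card_insert_of_notMem (by simp),
        Finset.card_insert_of_notMem (by simp [hdqr]),
        Finset.card_singleton]
    rw [h1, h2]
    omega


/-- Not all three vertices of a triple can have `a–b` matched. -/
lemma not_all_ab (hM : IsPopular R.H R.prefH M) {t : Finset V} (ht : t ∈ R.T)
    {i j k : V} (hij : i < j) (hjk : j < k) (hteq : t = {i, j, k})
    (habi : s(R.va i, R.vb i) ∈ M) (habj : s(R.va j, R.vb j) ∈ M)
    (habk : s(R.va k, R.vb k) ∈ M) : False := by
  have := R.ispvc.1
  obtain ⟨p1, p2, p3, p4, p5, p6, p7, p8, p9, p10, p11, p12⟩ :=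
    R.pref_tri t ht i j k hteq hij hjk
  have q1 : R.prefH (R.vc i) (R.vc k) = 3 := p1
  have q2 : R.prefH (R.vc i) (R.vc j) = 4 := p2
  have q3 : R.prefH (R.vc j) (R.vc i) = 3 := p3
  have q4 : R.prefH (R.vc j) (R.vc k) = 4 := p4
  have q5 : R.prefH (R.vc k) (R.vc j) = 3 := p5
  have q6 : R.prefH (R.vc k) (R.vc i) = 4 := p6
  have q7 : R.prefH (R.vd i) (R.vd j) = 2 := p7
  have q8 : R.prefH (R.vd i) (R.vd k) = 3 := p8
  have q9 : R.prefH (R.vd j) (R.vd k) = 2 := p9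
  have q10 : R.prefH (R.vd j) (R.vd i) = 3 := p10
  have q11 : R.prefH (R.vd k) (R.vd i) = 2 := p11
  have q12 : R.prefH (R.vd k) (R.vd j) = 3 := p12
  have hik : i < k := hij.trans hjk
  have hi' : i ∈ t := by rw [hteq]; simp
  have hj' : j ∈ t := by rw [hteq]; simp
  have hk' : k ∈ t := by rw [hteq]; simp
  have hmemt : ∀ y, y ∈ t → y = i ∨ y = j ∨ y = k := by
    intro y hy; rw [hteq] at hy; simpa using hy
  have hcpart : ∀ x, x ∈ t → s(R.va x, R.vb x) ∈ M → Matched M (R.vc x) →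
      ∃ y, y ∈ t ∧ y ≠ x ∧ s(R.vc x, R.vc y) ∈ M := by
    rintro x hx hab ⟨w, hw⟩
    rcases R.adj_c_inv ht hx (hM.1.adj hw) with rfl | rfl | ⟨y, hyt, hyx, rfl⟩
    · exact absurd (hM.1.partner_unique (mem_swap hw) hab) (by simp)
    · exact absurd (hM.1.partner_unique (mem_swap hw) (mem_swap hab)) (by simp)
    · exact ⟨y, hyt, hyx, hw⟩
  have hdpart : ∀ x, x ∈ t → s(R.va x, R.vb x) ∈ M → Matched M (R.vd x) →
      ∃ y, y ∈ t ∧ y ≠ x ∧ s(R.vd x, R.vd y) ∈ M := by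
    rintro x hx hab ⟨w, hw⟩
    rcases R.adj_d_inv ht hx (hM.1.adj hw) with rfl | ⟨y, hyt, hyx, rfl⟩
    · exact absurd (hM.1.partner_unique (mem_swap hw) hab) (by simp)
    · exact ⟨y, hyt, hyx, hw⟩
  have hcrot : ∃ cp cq cr, cq ∈ t ∧ cr ∈ t ∧ cq ≠ cr ∧
      s(R.vc cq, R.vc cp) ∈ M ∧ ¬ Matched M (R.vc cr) ∧
      R.prefH (R.vc cq) (R.vc cr) < R.prefH (R.vc cq) (R.vc cp) ∧
      R.prefH (R.vc cr) (R.vc cq) ≤ 4 ∧ 4 < rank R.H R.prefH M (R.vc cr) := by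
    by_cases hcij : s(R.vc i, R.vc j) ∈ M
    · have hfk : ¬ Matched M (R.vc k) := by
        intro hm
        obtain ⟨y, hyt, hyk, hw⟩ := hcpart k hk' habk hm
        rcases hmemt y hyt with rfl | rfl | rfl
        · exact absurd (hM.1.partner_unique hcij (mem_swap hw)) (by simp [hjk.ne])
        · exact absurd (hM.1.partner_unique (mem_swap hcij) (mem_swap hw))
            (by simp [hik.ne])
        · exact hyk rfl
      exact ⟨j, i, k, hi', hk', hik.ne, hcij, hfk, by rw [q1, q2]; omega, by rw [q6],
        R.rank_vc_gt hM.1 hfk ht hk' hi' hj' hik.ne' hjk.ne' hij.ne⟩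
    · by_cases hcik : s(R.vc i, R.vc k) ∈ M
      · have hfj : ¬ Matched M (R.vc j) := by
          intro hm
          obtain ⟨y, hyt, hyj, hw⟩ := hcpart j hj' habj hm
          rcases hmemt y hyt with rfl | rfl | rfl
          · exact absurd (hM.1.partner_unique (mem_swap hw) hcik) (by simp [hjk.ne])
          · exact hyj rfl
          · exact absurd (hM.1.partner_unique (mem_swap hw) (mem_swap hcik))
              (by simp [hij.ne'])
        exact ⟨i, k, j, hk', hj', hjk.ne', mem_swap hcik, hfj, by rw [q5, q6]; omega,
          by rw [q4], R.rank_vc_gt hM.1 hfj ht hj' hi' hk' hij.ne' hjk.ne hik.ne⟩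
      · by_cases hcjk : s(R.vc j, R.vc k) ∈ M
        · have hfi : ¬ Matched M (R.vc i) := by
            intro hm
            obtain ⟨y, hyt, hyi, hw⟩ := hcpart i hi' habi hm
            rcases hmemt y hyt with rfl | rfl | rfl
            · exact hyi rfl
            · exact absurd hw hcij
            · exact absurd hw hcik
          exact ⟨k, j, i, hj', hi', hij.ne', hcjk, hfi, by rw [q3, q4]; omega,
            by rw [q2], R.rank_vc_gt hM.1 hfi ht hi' hj' hk' hij.ne hik.ne hjk.ne⟩
        · have hfi : ¬ Matched M (R.vc i) := by
            intro hm
            obtain ⟨y, hyt, hyi, hw⟩ := hcpart i hi' habi hm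
            rcases hmemt y hyt with rfl | rfl | rfl
            · exact hyi rfl
            · exact absurd hw hcij
            · exact absurd hw hcik
          have hfj : ¬ Matched M (R.vc j) := by
            intro hm
            obtain ⟨y, hyt, hyj, hw⟩ := hcpart j hj' habj hm
            rcases hmemt y hyt with rfl | rfl | rfl
            · exact absurd (mem_swap hw) hcij
            · exact hyj rfl
            · exact absurd hw hcjk
          exact absurd (augment hM (R.adj_cc ht hi' hj' hij.ne) hfi hfj
            (by rw [show R.prefH (R.vc i) (R.vc j) = 4 from q2]
                exact R.rank_vc_gt hM.1 hfi ht hi' hj' hk' hij.ne hik.ne hjk.ne)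
            (by have := R.rank_vc_gt hM.1 hfj ht hj' hi' hk' hij.ne' hjk.ne hik.ne
                rw [show R.prefH (R.vc j) (R.vc i) = 3 from q3]
                omega)) (fun h => h)
  have hdrot : ∃ dp dq dr, dq ∈ t ∧ dr ∈ t ∧ dq ≠ dr ∧
      s(R.vd dq, R.vd dp) ∈ M ∧ ¬ Matched M (R.vd dr) ∧
      R.prefH (R.vd dq) (R.vd dr) < R.prefH (R.vd dq) (R.vd dp) ∧
      R.prefH (R.vd dr) (R.vd dq) ≤ 3 ∧ 3 < rank R.H R.prefH M (R.vd dr) := by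
    by_cases hdij : s(R.vd i, R.vd j) ∈ M
    · have hfk : ¬ Matched M (R.vd k) := by
        intro hm
        obtain ⟨y, hyt, hyk, hw⟩ := hdpart k hk' habk hm
        rcases hmemt y hyt with rfl | rfl | rfl
        · exact absurd (hM.1.partner_unique hdij (mem_swap hw)) (by simp [hjk.ne])
        · exact absurd (hM.1.partner_unique (mem_swap hdij) (mem_swap hw))
            (by simp [hik.ne])
        · exact hyk rfl
      exact ⟨i, j, k, hj', hk', hjk.ne, mem_swap hdij, hfk, by rw [q9, q10]; omega,
        by rw [q12], R.rank_vd_gt hM.1 hfk ht hk' hi' hj' hik.ne' hjk.ne' hij.ne⟩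
    · by_cases hdik : s(R.vd i, R.vd k) ∈ M
      · have hfj : ¬ Matched M (R.vd j) := by
          intro hm
          obtain ⟨y, hyt, hyj, hw⟩ := hdpart j hj' habj hm
          rcases hmemt y hyt with rfl | rfl | rfl
          · exact absurd (hM.1.partner_unique (mem_swap hw) hdik) (by simp [hjk.ne])
          · exact hyj rfl
          · exact absurd (hM.1.partner_unique (mem_swap hw) (mem_swap hdik))
              (by simp [hij.ne'])
        exact ⟨k, i, j, hi', hj', hij.ne, hdik, hfj, by rw [q7, q8]; omega,
          by rw [q10], R.rank_vd_gt hM.1 hfj ht hj' hi' hk' hij.ne' hjk.ne hik.ne⟩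
      · by_cases hdjk : s(R.vd j, R.vd k) ∈ M
        · have hfi : ¬ Matched M (R.vd i) := by
            intro hm
            obtain ⟨y, hyt, hyi, hw⟩ := hdpart i hi' habi hm
            rcases hmemt y hyt with rfl | rfl | rfl
            · exact hyi rfl
            · exact absurd hw hdij
            · exact absurd hw hdik
          exact ⟨j, k, i, hk', hi', hik.ne', mem_swap hdjk, hfi, by rw [q11, q12]; omega,
            by rw [q8], R.rank_vd_gt hM.1 hfi ht hi' hj' hk' hij.ne hik.ne hjk.ne⟩
        · have hfi : ¬ Matched M (R.vd i) := by
            intro hm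
            obtain ⟨y, hyt, hyi, hw⟩ := hdpart i hi' habi hm
            rcases hmemt y hyt with rfl | rfl | rfl
            · exact hyi rfl
            · exact absurd hw hdij
            · exact absurd hw hdik
          have hfj : ¬ Matched M (R.vd j) := by
            intro hm
            obtain ⟨y, hyt, hyj, hw⟩ := hdpart j hj' habj hm
            rcases hmemt y hyt with rfl | rfl | rfl
            · exact absurd (mem_swap hw) hdij
            · exact hyj rfl
            · exact absurd hw hdjk
          exact absurd (augment hM (R.adj_dd ht hi' hj' hij.ne) hfi hfj
            (by have := R.rank_vd_gt hM.1 hfi ht hi' hj' hk' hij.ne hik.ne hjk.ne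
                rw [show R.prefH (R.vd i) (R.vd j) = 2 from q7]
                omega)
            (by rw [show R.prefH (R.vd j) (R.vd i) = 3 from q10]
                exact R.rank_vd_gt hM.1 hfj ht hj' hi' hk' hij.ne' hjk.ne hik.ne))
            (fun h => h)
  obtain ⟨cp, cq, cr, hcq, hcr, hcqr, hc, hcfree, hc1, hc2, hc3⟩ := hcrot
  obtain ⟨dp, dq, dr, hdq, hdr, hdqr, hd, hdfree, hd1, hd2, hd3⟩ := hdrot
  exact R.rot_exchange hM ht hcq hcr hdq hdr hcqr hdqr hc hcfree hd hdfree
    hc1 hc2 hd1 hd2 hc3 hd3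

end Reduction
end Struct


/-- If `M` is a popular matching in `H` and `U = {i : {a_i, b_i} in M}`, then
`|U ∩ T| = 2` for every triple `T ∈ 𝒯`. -/
theorem popular_triple_count {V : Type u} [LinearOrder V] (R : Reduction V)
    (M : Set (Sym2 R.HV)) (hM : IsPopular R.H R.prefH M) :
    ∀ t ∈ R.T, {x : V | x ∈ t ∧ s(R.va x, R.vb x) ∈ M}.ncard = 2 := by
  intro t ht
  have hfin := R.ispvc.1
  obtain ⟨i, j, k, hij, hjk, hteq⟩ := R.triple_sorted ht
  have hik : i < k := hij.trans hjk
  have hi' : i ∈ t := by rw [hteq]; simp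
  have hj' : j ∈ t := by rw [hteq]; simp
  have hk' : k ∈ t := by rw [hteq]; simp
  have hmemt : ∀ y, y ∈ t → y = i ∨ y = j ∨ y = k := by
    intro y hy; rw [hteq] at hy; simpa using hy
  have hadj : ∀ x ∈ t, ∀ y ∈ t, x ≠ y → R.G.Adj x y := R.ispvc.2.2.2.2.1 t ht
  have hnotboth : ∀ x : V, s(R.va x, R.vb x) ∈ M → s(R.va x, R.vd x) ∈ M → False := by
    intro x h1 h2
    exact hM.1.2 _ h1 _ h2 (by simp) (R.va x) (Sym2.mem_mk_left _ _) (Sym2.mem_mk_left _ _)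
  have hdich := R.ab_or_ad hM
  have hnottwo : ∀ x, x ∈ t → ∀ y, y ∈ t → x ≠ y → s(R.va x, R.vd x) ∈ M →
      s(R.va y, R.vd y) ∈ M → False := by
    intro x hx y hy hxy hax hay
    have hbx : s(R.vb x, R.vc x) ∈ M := by
      rcases hdich x with h | ⟨_, h⟩
      · exact (hnotboth x h hax).elim
      · exact h
    have hby : s(R.vb y, R.vc y) ∈ M := by
      rcases hdich y with h | ⟨_, h⟩
      · exact (hnotboth y h hay).elim
      · exact h
    exact R.not_two_closed hM (hadj x hx y hy hxy) hax hbx hay hby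
  rcases hdich i with habi | ⟨hadi, _⟩
  · rcases hdich j with habj | ⟨hadj', _⟩
    · rcases hdich k with habk | ⟨hadk, _⟩
      · exact (R.not_all_ab hM ht hij hjk hteq habi habj habk).elim
      · have hset : {x : V | x ∈ t ∧ s(R.va x, R.vb x) ∈ M} = {i, j} := by
          ext x
          simp only [Set.mem_setOf_eq, Set.mem_insert_iff, Set.mem_singleton_iff]
          constructor
          · rintro ⟨hxt, hxab⟩
            rcases hmemt x hxt with rfl | rfl | rfl
            · exact Or.inl rfl
            · exact Or.inr rfl
            · exact (hnotboth x hxab hadk).elim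
          · rintro (rfl | rfl)
            · exact ⟨hi', habi⟩
            · exact ⟨hj', habj⟩
        rw [hset]
        exact Set.ncard_pair hij.ne
    · rcases hdich k with habk | ⟨hadk, _⟩
      · have hset : {x : V | x ∈ t ∧ s(R.va x, R.vb x) ∈ M} = {i, k} := by
          ext x
          simp only [Set.mem_setOf_eq, Set.mem_insert_iff, Set.mem_singleton_iff]
          constructor
          · rintro ⟨hxt, hxab⟩
            rcases hmemt x hxt with rfl | rfl | rfl
            · exact Or.inl rfl
            · exact (hnotboth x hxab hadj').elim
            · exact Or.inr rfl
          · rintro (rfl | rfl)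
            · exact ⟨hi', habi⟩
            · exact ⟨hk', habk⟩
        rw [hset]
        exact Set.ncard_pair hik.ne
      · exact (hnottwo j hj' k hk' hjk.ne hadj' hadk).elim
  · have habj : s(R.va j, R.vb j) ∈ M := by
      rcases hdich j with h | ⟨h', _⟩
      · exact h
      · exact (hnottwo i hi' j hj' hij.ne hadi h').elim
    have habk : s(R.va k, R.vb k) ∈ M := by
      rcases hdich k with h | ⟨h', _⟩
      · exact h
      · exact (hnottwo i hi' k hk' hik.ne hadi h').elim
    have hset : {x : V | x ∈ t ∧ s(R.va x, R.vb x) ∈ M} = {j, k} := by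
      ext x
      simp only [Set.mem_setOf_eq, Set.mem_insert_iff, Set.mem_singleton_iff]
      constructor
      · rintro ⟨hxt, hxab⟩
        rcases hmemt x hxt with rfl | rfl | rfl
        · exact (hnotboth x hxab hadi).elim
        · exact Or.inl rfl
        · exact Or.inr rfl
      · rintro (rfl | rfl)
        · exact ⟨hj', habj⟩
        · exact ⟨hk', habk⟩
    rw [hset]
    exact Set.ncard_pair hjk.ne
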